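/- The marginal densities of the Freund bivariate distribution are exponential if and only if α₁=β₁ and α₂=β₂. -/

import Mathlib

open MeasureTheory Real

/-- The Freund bivariate mixture exponential density. -/
noncomputable def freund (a1 b1 a2 b2 : ℝ) (x y : ℝ) : ℝ :=
  if 0 < x ∧ x < y then a1 * b2 * Real.exp (-b2 * y - (a1 + a2 - b2) * x)
  else if 0 < y ∧ y < x then a2 * b1 * Real.exp (-b1 * x - (a1 + a2 - b1) * y)
  else 0

/-- Marginal density of X. -/
noncomputable def freundMarginalX (a1 b1 a2 b2 : ℝ) (x : ℝ) : ℝ :=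
  ∫ y in Set.Ioi (0:ℝ), freund a1 b1 a2 b2 x y

/-- Marginal density of Y. -/
noncomputable def freundMarginalY (a1 b1 a2 b2 : ℝ) (y : ℝ) : ℝ :=
  ∫ x in Set.Ioi (0:ℝ), freund a1 b1 a2 b2 x y

open Set Filter

lemma expIoi {b : ℝ} (hb : 0 < b) (a : ℝ) :
    ∫ y in Ioi a, Real.exp (-b*y) = Real.exp (-b*a)/b := by
  have hderiv : ∀ y ∈ Ici a, HasDerivAt (fun y => -Real.exp (-b*y)/b) (Real.exp (-b*y)) y := by
    intro y _
    have h1 : HasDerivAt (fun y : ℝ => -b*y) (-b) y := by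
      simpa using (hasDerivAt_id y).const_mul (-b)
    have := (h1.exp.neg).div_const b
    rw [show Real.exp (-b*y) = -(Real.exp (-b*y) * -b) / b by rw [eq_div_iff hb.ne']; ring]
    exact this
  have hint : IntegrableOn (fun y => Real.exp (-b*y)) (Ioi a) := exp_neg_integrableOn_Ioi a hb
  have htend : Tendsto (fun y => -Real.exp (-b*y)/b) atTop (nhds 0) := by
    have h1 : Tendsto (fun y : ℝ => b*y) atTop atTop :=
      Tendsto.const_mul_atTop hb tendsto_id
    have h2 : Tendsto (fun y : ℝ => Real.exp (-(b*y))) atTop (nhds 0) :=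
      (tendsto_exp_neg_atTop_nhds_zero).comp h1
    have : Tendsto (fun y : ℝ => -Real.exp (-(b*y))/b) atTop (nhds (-0/b)) :=
      (h2.neg).div_const b
    simpa [neg_mul] using this
  have := MeasureTheory.integral_Ioi_of_hasDerivAt_of_tendsto' hderiv hint htend
  rw [this]; ring
lemma expInt {c : ℝ} (hc : c ≠ 0) (x : ℝ) :
    ∫ y in (0:ℝ)..x, Real.exp (-c*y) = (1 - Real.exp (-c*x))/c := by
  have hderiv : ∀ y ∈ Set.uIcc (0:ℝ) x, HasDerivAt (fun y => -Real.exp (-c*y)/c) (Real.exp (-c*y)) y := by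
    intro y _
    have h1 : HasDerivAt (fun y : ℝ => -c*y) (-c) y := by
      simpa using (hasDerivAt_id y).const_mul (-c)
    have := (h1.exp.neg).div_const c
    rw [show Real.exp (-c*y) = -(Real.exp (-c*y) * -c) / c by rw [eq_div_iff hc]; ring]
    exact this
  have hcont : IntervalIntegrable (fun y => Real.exp (-c*y)) volume 0 x :=
    (Continuous.intervalIntegrable (by continuity) 0 x)
  rw [intervalIntegral.integral_eq_sub_of_hasDerivAt hderiv hcont]
  field_simp
  rw [mul_zero, neg_zero, Real.exp_zero]; ring
lemma marginalX_eq {a1 b1 a2 b2 : ℝ} (hb2 : 0 < b2) {x : ℝ} (hx : 0 < x) :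
    freundMarginalX a1 b1 a2 b2 x = a1 * Real.exp (-(a1+a2)*x)
      + a2*b1*Real.exp (-b1*x) * ∫ y in (0:ℝ)..x, Real.exp (-(a1+a2-b1)*y) := by
  have hne : ∀ᵐ y : ℝ, y ≠ x := by
    rw [MeasureTheory.ae_iff]
    simpa using measure_singleton x
  set c : ℝ := a1+a2-b1 with hc
  -- ae equality on Ioc 0 x
  have hcongr1 : ∀ᵐ y : ℝ, y ∈ Ioc (0:ℝ) x →
      freund a1 b1 a2 b2 x y = (a2*b1*Real.exp (-b1*x)) * Real.exp (-c*y) := by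
    filter_upwards [hne] with y hy hyI
    have h2 : 0 < y ∧ y < x := ⟨hyI.1, lt_of_le_of_ne hyI.2 hy⟩
    have h1 : ¬(0 < x ∧ x < y) := fun h => absurd h.2 (not_lt.mpr hyI.2)
    simp only [freund, h1, h2, if_true, if_false, and_true, if_neg h1, if_pos h2]
    rw [show (-b1*x-(a1+a2-b1)*y) = (-b1*x) + (-c*y) by rw [hc]; ring, Real.exp_add]
    ring
  have hcongr2 : ∀ y ∈ Ioi x,
      freund a1 b1 a2 b2 x y = (a1*b2*Real.exp (-(a1+a2-b2)*x)) * Real.exp (-b2*y) := by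
    intro y hy
    have h1 : 0 < x ∧ x < y := ⟨hx, hy⟩
    simp only [freund, if_pos h1]
    rw [show (-b2*y-(a1+a2-b2)*x) = (-(a1+a2-b2)*x) + (-b2*y) by ring, Real.exp_add]
    ring
  have hint1 : IntegrableOn (freund a1 b1 a2 b2 x) (Ioc 0 x) := by
    have : IntegrableOn (fun y => (a2*b1*Real.exp (-b1*x)) * Real.exp (-c*y)) (Ioc 0 x) :=
      (Continuous.integrableOn_Ioc (by continuity))
    exact this.congr_fun_ae
      ((ae_restrict_iff' measurableSet_Ioc).2 (by
        filter_upwards [hcongr1] with y h hy; exact (h hy).symm))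
  have hint2 : IntegrableOn (freund a1 b1 a2 b2 x) (Ioi x) := by
    have : IntegrableOn (fun y => (a1*b2*Real.exp (-(a1+a2-b2)*x)) * Real.exp (-b2*y)) (Ioi x) :=
      (exp_neg_integrableOn_Ioi x hb2).const_mul _
    exact this.congr_fun (fun y hy => (hcongr2 y hy).symm) measurableSet_Ioi
  have hsplit : Ioi (0:ℝ) = Ioc 0 x ∪ Ioi x := (Ioc_union_Ioi_eq_Ioi hx.le).symm
  have hdisj : Disjoint (Ioc (0:ℝ) x) (Ioi x) := Ioc_disjoint_Ioi le_rfl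
  rw [freundMarginalX, hsplit,
    MeasureTheory.setIntegral_union hdisj measurableSet_Ioi hint1 hint2]
  have e1 : ∫ y in Ioc (0:ℝ) x, freund a1 b1 a2 b2 x y
      = (a2*b1*Real.exp (-b1*x)) * ∫ y in (0:ℝ)..x, Real.exp (-c*y) := by
    rw [MeasureTheory.setIntegral_congr_ae measurableSet_Ioc hcongr1,
      ← intervalIntegral.integral_of_le hx.le, intervalIntegral.integral_const_mul]
  have e2 : ∫ y in Ioi x, freund a1 b1 a2 b2 x y = a1 * Real.exp (-(a1+a2)*x) := by
    rw [MeasureTheory.setIntegral_congr_fun measurableSet_Ioi hcongr2,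
      MeasureTheory.integral_const_mul, expIoi hb2]
    rw [show (-(a1+a2)*x) = (-(a1+a2-b2)*x) + (-b2*x) by ring, Real.exp_add]
    field_simp
  rw [e1, e2]; ring
lemma freund_symm (a1 b1 a2 b2 x y : ℝ) :
    freund a2 b2 a1 b1 y x = freund a1 b1 a2 b2 x y := by
  unfold freund
  rcases lt_trichotomy x y with h | h | h
  · by_cases h0 : 0 < x
    · simp [h, h0, not_lt.mpr h.le, show a2+a1 = a1+a2 from add_comm _ _]
    · simp [h0, show ¬ (0 < y ∧ y < x) from fun hh => absurd (h.trans hh.2) (lt_irrefl x),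
        show ¬ (0 < x ∧ x < y) from fun hh => h0 hh.1]
  · simp [h, lt_irrefl]
  · by_cases h0 : 0 < y
    · simp [h, h0, not_lt.mpr h.le, show a2+a1 = a1+a2 from add_comm _ _]
    · simp [h0, show ¬ (0 < x ∧ x < y) from fun hh => absurd (h.trans hh.2) (lt_irrefl y),
        show ¬ (0 < y ∧ y < x) from fun hh => h0 hh.1]
lemma marginalY_swap (a1 b1 a2 b2 y : ℝ) :
    freundMarginalY a1 b1 a2 b2 y = freundMarginalX a2 b2 a1 b1 y := by
  unfold freundMarginalY freundMarginalX
  simp only [freund_symm]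
lemma pow2exp (t : ℝ) : Real.exp (-t*2) = Real.exp (-t)^2 := by
  rw [sq, ← Real.exp_add]; congr 1; ring
lemma pow3exp (t : ℝ) : Real.exp (-t*3) = Real.exp (-t)^3 := by
  rw [pow_succ, sq, ← Real.exp_add, ← Real.exp_add]; congr 1; ring
lemma forward {a1 b1 a2 l : ℝ} (ha1 : 0<a1) (hb1 : 0<b1) (ha2 : 0<a2) (hl : 0<l)
    (h : ∀ x > (0:ℝ), a1 * Real.exp (-(a1+a2)*x)
        + a2*b1*Real.exp (-b1*x) * ∫ y in (0:ℝ)..x, Real.exp (-(a1+a2-b1)*y)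
        = l * Real.exp (-l*x)) : a1 = b1 := by
  set s : ℝ := a1 + a2 with hs
  have hspos : 0 < s := by positivity
  by_cases hcase : s = b1
  · -- degenerate case: contradiction
    exfalso
    have h' : ∀ x > (0:ℝ), (a1 + a2*b1*x) * Real.exp (-s*x) = l * Real.exp (-l*x) := by
      intro x hx
      have hh := h x hx
      rw [show s - b1 = 0 from by rw [hcase]; ring] at hh
      simp only [neg_zero, zero_mul, Real.exp_zero] at hh
      rw [intervalIntegral.integral_const] at hh
      rw [← hcase] at hh ⊢
      simp only [sub_zero, smul_eq_mul, mul_one] at hh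
      linear_combination hh
    have e1 := h' 1 one_pos
    have e2 := h' 2 two_pos
    have e3 := h' 3 three_pos
    simp only [mul_one] at e1
    rw [pow2exp s, pow2exp l] at e2
    rw [pow3exp s, pow3exp l] at e3
    set P := Real.exp (-s) with hP
    set Q := Real.exp (-l) with hQ
    have hPpos : 0 < P := Real.exp_pos _
    have key : (a1 + a2*b1) * P * ((a1 + a2*b1*3) * P^3) = ((a1 + a2*b1*2) * P^2)^2 := by
      rw [e1, e3, e2]; ring
    have hz : (a2*b1)^2 * P^4 = 0 := by linear_combination -key
    have : (a2*b1)^2 * P^4 > 0 := by positivity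
    linarith
  · have hc : s - b1 ≠ 0 := sub_ne_zero.mpr hcase
    have h' : ∀ x > (0:ℝ), (a1 - a2*b1/(s-b1)) * Real.exp (-s*x)
        + (a2*b1/(s-b1)) * Real.exp (-b1*x) = l * Real.exp (-l*x) := by
      intro x hx
      have hh := h x hx
      rw [expInt hc] at hh
      have hsplit : Real.exp (-b1*x) * Real.exp (-(s-b1)*x) = Real.exp (-s*x) := by
        rw [← Real.exp_add]; congr 1; ring
      linear_combination hh + (a2*b1/(s-b1))*hsplit
    have e1 := h' 1 one_pos
    have e2 := h' 2 two_pos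
    have e3 := h' 3 three_pos
    simp only [mul_one] at e1
    rw [pow2exp s, pow2exp b1, pow2exp l] at e2
    rw [pow3exp s, pow3exp b1, pow3exp l] at e3
    set u := Real.exp (-s) with hu
    set v := Real.exp (-b1) with hv
    set w := Real.exp (-l) with hw
    have hupos : 0 < u := Real.exp_pos _
    have hvpos : 0 < v := Real.exp_pos _
    have huv : u ≠ v := fun hh => hcase (neg_injective (Real.exp_injective hh))
    have hK : a2*b1/(s-b1) ≠ 0 := div_ne_zero (mul_pos ha2 hb1).ne' hc
    by_cases hlw : l = s
    · exfalso
      rw [hlw] at e1 e2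
      have hz : (a2*b1/(s-b1))*(v*(v-u)) = 0 := by
        rw [hlw] at hw
        rw [hw] at e1 e2
        linear_combination e2 - u*e1
      exact (mul_ne_zero hK (mul_ne_zero hvpos.ne'
        (sub_ne_zero.mpr (Ne.symm huv)))) hz
    · have huw : u ≠ w := fun hh => hlw (neg_injective (Real.exp_injective hh)).symm
      have hA : (a1 - a2*b1/(s-b1)) * (u*(u-v)*(u-w)) = 0 := by
        linear_combination e3 - (v+w)*e2 + v*w*e1
      have hfac : u*(u-v)*(u-w) ≠ 0 :=
        mul_ne_zero (mul_ne_zero hupos.ne' (sub_ne_zero.mpr huv)) (sub_ne_zero.mpr huw)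
      have hA0 : a1 - a2*b1/(s-b1) = 0 := by
        rcases mul_eq_zero.mp hA with h0 | h0
        · exact h0
        · exact absurd h0 hfac
      have hA1 : a1*(s-b1) = a2*b1 := by
        field_simp at hA0
        linarith
      have h0 : (a1 - b1)*(a1+a2) = 0 := by linear_combination hA1 - a1*hs
      rcases mul_eq_zero.mp h0 with h0 | h0
      · linarith
      · exfalso; rw [hs] at hspos; linarith

/-- Both marginals of the Freund distribution are exponential densities
iff `a1 = b1` and `a2 = b2`. -/
theorem freund_marginals_exponential_iff (a1 b1 a2 b2 : ℝ)
    (ha1 : 0 < a1) (hb1 : 0 < b1) (ha2 : 0 < a2) (hb2 : 0 < b2) :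
    ((∃ l1 > (0:ℝ), ∀ x > (0:ℝ),
        freundMarginalX a1 b1 a2 b2 x = l1 * Real.exp (-l1 * x)) ∧
     (∃ l2 > (0:ℝ), ∀ y > (0:ℝ),
        freundMarginalY a1 b1 a2 b2 y = l2 * Real.exp (-l2 * y)))
    ↔ (a1 = b1 ∧ a2 = b2) := by
  constructor
  · rintro ⟨⟨l1, hl1, h1⟩, ⟨l2, hl2, h2⟩⟩
    constructor
    · apply forward ha1 hb1 ha2 hl1
      intro x hx
      rw [← marginalX_eq hb2 hx]
      exact h1 x hx
    · apply forward ha2 hb2 ha1 hl2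
      intro y hy
      rw [← marginalX_eq hb1 hy, ← marginalY_swap]
      exact h2 y hy
  · rintro ⟨rfl, rfl⟩
    have key : ∀ c1 c2 : ℝ, 0 < c1 → 0 < c2 → ∀ x > (0:ℝ),
        freundMarginalX c1 c1 c2 c2 x = c1 * Real.exp (-c1 * x) := by
      intro c1 c2 hc1 hc2 x hx
      rw [marginalX_eq hc2 hx, show c1+c2-c1 = c2 from by ring, expInt hc2.ne']
      have hsplit : Real.exp (-c1*x) * Real.exp (-c2*x) = Real.exp (-(c1+c2)*x) := by
        rw [← Real.exp_add]; congr 1; ring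
      have hsplit2 : Real.exp ((-c2-c1)*x) = Real.exp (-(c1+c2)*x) := by congr 1; ring
      have hdiv : c2*c1*Real.exp (-c1*x) * ((1 - Real.exp (-c2*x))/c2)
          = c1*Real.exp (-c1*x) * (1 - Real.exp (-c2*x)) := by
        field_simp
      rw [hdiv]
      linear_combination -c1*hsplit
    refine ⟨⟨a1, ha1, key a1 a2 ha1 ha2⟩, ⟨a2, ha2, fun y hy => ?_⟩⟩
    rw [marginalY_swap]
    exact key a2 a1 ha2 ha1 y hy
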